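/- Let n ≥ 2 and let T be a maximal nilpotent subsemigroup of D_n (a maximal element, with respect to inclusion, of the set of all nilpotent subsemigroups of D_n). Then T is a compact subset of the space of n×n real matrices. -/

import Mathlib

namespace NilSg

variable {M : Type*}

/-- `T ⊆ M` is closed under multiplication. -/
def IsSubsg [Mul M] (T : Set M) : Prop :=
  ∀ ⦃a⦄, a ∈ T → ∀ ⦃b⦄, b ∈ T → a * b ∈ T

/-- Every product of exactly `k` elements of `T` equals `z`
(such products are the products of nonempty lists `a :: l` of elements of `T`). -/
def ProdEq [Mul M] (z : M) (T : Set M) (k : ℕ) : Prop :=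
  ∀ (a : M) (l : List M), a ∈ T → (∀ x ∈ l, x ∈ T) → l.length + 1 = k →
    l.foldl (· * ·) a = z

/-- `T` is a nilpotent subsemigroup with respect to the zero element `z`. -/
def IsNilSubsg [Mul M] (z : M) (T : Set M) : Prop :=
  IsSubsg T ∧ ∃ k, 0 < k ∧ ProdEq z T k

/-- The nilpotency class of `T`: the minimal `k ≥ 1` such that every product of `k`
elements of `T` equals `z`. -/
noncomputable def nilClass [Mul M] (z : M) (T : Set M) : ℕ :=
  sInf {k | 0 < k ∧ ProdEq z T k}

/-- `T` is a nilpotent subsemigroup of `S` (with zero `z`). -/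
def NilIn [Mul M] (z : M) (S : Set M) (T : Set M) : Prop :=
  T ⊆ S ∧ IsNilSubsg z T

/-- `T` is a nilpotent subsemigroup of `S` (with zero `z`) of nilpotency class at most `k`. -/
def NilLe [Mul M] (z : M) (S : Set M) (k : ℕ) (T : Set M) : Prop :=
  T ⊆ S ∧ IsNilSubsg z T ∧ nilClass z T ≤ k

/-- `Ω n`: the semigroup of `n × n` real matrices with nonnegative entries. -/
def Omega (n : ℕ) : Set (Matrix (Fin n) (Fin n) ℝ) :=
  {A | ∀ i j, 0 ≤ A i j}

/-- `Q n`: the semigroup of `n × n` real matrices all of whose row sums and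
column sums equal `1`. -/
def Qset (n : ℕ) : Set (Matrix (Fin n) (Fin n) ℝ) :=
  {A | (∀ i, ∑ j, A i j = 1) ∧ (∀ j, ∑ i, A i j = 1)}

/-- `D n`: the semigroup of `n × n` doubly stochastic real matrices. -/
def Dset (n : ℕ) : Set (Matrix (Fin n) (Fin n) ℝ) :=
  {A | (∀ i j, 0 ≤ A i j) ∧ (∀ i, ∑ j, A i j = 1) ∧ (∀ j, ∑ i, A i j = 1)}

/-- The matrix all of whose entries equal `1/n`: the zero element of `Q n` and `D n`. -/
noncomputable def On (n : ℕ) : Matrix (Fin n) (Fin n) ℝ :=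
  Matrix.of fun _ _ => (n : ℝ)⁻¹

/-- The hyperplane `V` of all vectors whose coordinates sum to `0`. -/
def Vsub (n : ℕ) : Submodule ℝ (Fin n → ℝ) where
  carrier := {x | ∑ i, x i = 0}
  add_mem' := by
    intro a b ha hb
    simp only [Set.mem_setOf_eq, Pi.add_apply] at *
    simp [Finset.sum_add_distrib, ha, hb]
  zero_mem' := by simp
  smul_mem' := by
    intro c x hx
    simp only [Set.mem_setOf_eq, Pi.smul_apply, smul_eq_mul] at *
    simp [← Finset.mul_sum, hx]

open Filter Topology

instance {n : ℕ} : FrechetUrysohnSpace (Matrix (Fin n) (Fin n) ℝ) :=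
  inferInstanceAs (FrechetUrysohnSpace (Fin n → Fin n → ℝ))

lemma tendsto_foldl_mul {n : ℕ} {l : List (ℕ → Matrix (Fin n) (Fin n) ℝ)}
    {L : List (Matrix (Fin n) (Fin n) ℝ)}
    (h : List.Forall₂ (fun f x => Tendsto f atTop (𝓝 x)) l L) :
    ∀ (f : ℕ → Matrix (Fin n) (Fin n) ℝ) (a : Matrix (Fin n) (Fin n) ℝ),
      Tendsto f atTop (𝓝 a) →
      Tendsto (fun j => (l.map (· j)).foldl (· * ·) (f j)) atTop
        (𝓝 (L.foldl (· * ·) a)) := by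
  induction h with
  | nil => intro f a hf; simpa using hf
  | @cons g x l' L' hfx _ ih =>
    intro f a hf
    simpa using ih _ _ (hf.mul hfx)

lemma exists_seq_list {n : ℕ} (T : Set (Matrix (Fin n) (Fin n) ℝ))
    (L : List (Matrix (Fin n) (Fin n) ℝ)) (hL : ∀ x ∈ L, x ∈ closure T) :
    ∃ l : List (ℕ → Matrix (Fin n) (Fin n) ℝ),
      (∀ f ∈ l, ∀ j, f j ∈ T) ∧
      List.Forall₂ (fun f x => Tendsto f atTop (𝓝 x)) l L := by
  induction L with
  | nil => exact ⟨[], by simp, List.Forall₂.nil⟩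
  | cons x L ih =>
    obtain ⟨l, hl1, hl2⟩ := ih (fun y hy => hL y (List.mem_cons_of_mem _ hy))
    obtain ⟨f, hfT, hf⟩ := mem_closure_iff_seq_limit.1 (hL x List.mem_cons_self)
    refine ⟨f :: l, ?_, List.Forall₂.cons hf hl2⟩
    intro g hg j
    rcases List.mem_cons.1 hg with rfl | hg
    · exact hfT j
    · exact hl1 g hg j

lemma isClosed_Dset (n : ℕ) : IsClosed (Dset n) := by
  have : Dset n = (⋂ i, ⋂ j, {A : Matrix (Fin n) (Fin n) ℝ | 0 ≤ A i j}) ∩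
      ((⋂ i, {A : Matrix (Fin n) (Fin n) ℝ | ∑ j, A i j = 1}) ∩
       (⋂ j, {A : Matrix (Fin n) (Fin n) ℝ | ∑ i, A i j = 1})) := by
    ext A
    simp only [Dset, Set.mem_setOf_eq, Set.mem_inter_iff, Set.mem_iInter]
  rw [this]
  refine IsClosed.inter ?_ (IsClosed.inter ?_ ?_)
  · exact isClosed_iInter fun i => isClosed_iInter fun j =>
      isClosed_le continuous_const (continuous_id.matrix_elem i j)
  · exact isClosed_iInter fun i =>
      isClosed_eq (continuous_finset_sum _ fun j _ => continuous_id.matrix_elem i j)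
        continuous_const
  · exact isClosed_iInter fun j =>
      isClosed_eq (continuous_finset_sum _ fun i _ => continuous_id.matrix_elem i j)
        continuous_const

lemma isCompact_Dset (n : ℕ) : IsCompact (Dset n) := by
  have hK : IsCompact (Set.univ.pi
      (fun _ : Fin n => Set.univ.pi fun _ : Fin n => Set.Icc (0:ℝ) 1) :
      Set (Matrix (Fin n) (Fin n) ℝ)) :=
    isCompact_univ_pi fun _ => isCompact_univ_pi fun _ => isCompact_Icc
  refine hK.of_isClosed_subset (isClosed_Dset n) ?_
  rintro A ⟨h0, hr, _⟩
  intro i _ j _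
  refine ⟨h0 i j, ?_⟩
  calc A i j ≤ ∑ j', A i j' :=
        Finset.single_le_sum (fun j' _ => h0 i j') (Finset.mem_univ j)
    _ = 1 := hr i

/-- Every maximal nilpotent subsemigroup of `D_n` is a compact subset
of the space of `n × n` real matrices. -/
theorem stmt19 (n : ℕ) (hn : 2 ≤ n) (T : Set (Matrix (Fin n) (Fin n) ℝ))
    (hT : Maximal (NilIn (On n) (Dset n)) T) :
    IsCompact T := by
  obtain ⟨⟨hTD, hTsg, k, hk, hprod⟩, hmax⟩ := hT
  -- the closure of `T` is again a nilpotent subsemigroup of `D_n`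
  have hclD : closure T ⊆ Dset n := closure_minimal hTD (isClosed_Dset n)
  have hclsg : IsSubsg (closure T) := by
    intro a ha b hb
    exact map_mem_closure₂ continuous_mul ha hb fun x hx y hy => hTsg hx hy
  have hclprod : ProdEq (On n) (closure T) k := by
    intro a L ha hL hlen
    obtain ⟨f, hfT, hf⟩ := mem_closure_iff_seq_limit.1 ha
    obtain ⟨l, hl1, hl2⟩ := exists_seq_list T L hL
    have key : ∀ j, (l.map (· j)).foldl (· * ·) (f j) = On n := by
      intro j
      refine hprod (f j) (l.map (· j)) (hfT j) ?_ ?_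
      · intro x hx
        obtain ⟨g, hg, rfl⟩ := List.mem_map.1 hx
        exact hl1 g hg j
      · rw [List.length_map, hl2.length_eq, hlen]
    have h1 := tendsto_foldl_mul hl2 f a hf
    rw [show (fun j => (l.map (· j)).foldl (· * ·) (f j)) = fun _ => On n
        from funext key] at h1
    exact (tendsto_nhds_unique tendsto_const_nhds h1).symm
  have hsub : closure T ⊆ T :=
    hmax ⟨hclD, hclsg, k, hk, hclprod⟩ subset_closure
  have hclosed : IsClosed T := isClosed_of_closure_subset hsub
  exact (isCompact_Dset n).of_isClosed_subset hclosed hTD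

end NilSg
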